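/- Assume p = 2, d = d2 > d1 > 1, and j2 = 0 (equivalently f2(X,Y) = Σ_{0<i≤d2} b_{i,0} X^i depends only on X). If d2 + 1 > 2·d1, then S_{f1,f2} contains an absolutely irreducible component defined over 𝔽_q. -/

import Mathlib

open MvPolynomial Finset

/-- The homogeneous polynomial `F` defining the hypersurface `S_{f1,f2}` for
`f1(X,Y) = Y + ∑ a_i X^i` and `f2(X,Y) = ∑ b_{i,j} X^i Y^j`, with
`d = max (deg f1) (deg f2)`. -/
noncomputable def SpolySpec {F : Type} [Field F] (a : ℕ → F) (b : ℕ → ℕ → F) (d : ℕ) :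
    MvPolynomial (Fin 5) F :=
  (X 2 - X 4) ^ 2 * X 0 ^ (d - 1)
  - (X 2 - X 4) * (∑ i ∈ Finset.range (d + 1), C (a i) * (X 3 ^ i - X 1 ^ i) * X 0 ^ (d - i))
  - (X 1 - X 3) * (∑ i ∈ Finset.range (d + 1), ∑ j ∈ Finset.range (d + 1),
      C (b i j) * (X 3 ^ i * X 4 ^ j - X 1 ^ i * X 2 ^ j) * X 0 ^ (d - i - j))

/-- `P` has a nonconstant divisor over `F` that stays irreducible over the algebraic
closure, i.e. the hypersurface `P = 0` contains an absolutely irreducible component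
defined over `F`. -/
def HasAbsIrredComp {F : Type} [Field F] (P : MvPolynomial (Fin 5) F) : Prop :=
  ∃ g : MvPolynomial (Fin 5) F, g ∣ P ∧ g.totalDegree ≠ 0 ∧
    Irreducible (MvPolynomial.map (algebraMap F (AlgebraicClosure F)) g)

theorem stmt9_key_dvd {R : Type*} [CommRing R] [IsDomain R] {q A1 A2 : R} (hq : q ≠ 0)
    (h1 : ¬ q ∣ A1) {i k n : ℕ} (hik : i ≤ k) (hin : i < n)
    (hdvd : q ^ n ∣ q ^ i * A1 + q ^ k * A2) : i = k ∧ q ∣ A1 + A2 := by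
  obtain ⟨t, ht⟩ := hdvd
  have hqi : q ^ i ≠ 0 := pow_ne_zero _ hq
  have hcan : A1 + q ^ (k - i) * A2 = q ^ (n - i) * t := by
    apply mul_left_cancel₀ hqi
    rw [mul_add, ← mul_assoc, ← pow_add, ← mul_assoc, ← pow_add]
    rw [Nat.add_sub_cancel' hik, Nat.add_sub_cancel' (le_of_lt hin)]
    exact ht
  have hqdvd : q ∣ A1 + q ^ (k - i) * A2 := by
    rw [hcan]
    exact Dvd.dvd.mul_right (dvd_pow_self q (by omega)) t
  rcases eq_or_lt_of_le hik with heq | hlt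
  · refine ⟨heq, ?_⟩
    simpa [← heq, Nat.sub_self] using hqdvd
  · exfalso
    apply h1
    have h2 : q ∣ q ^ (k - i) * A2 := Dvd.dvd.mul_right (dvd_pow_self q (by omega)) A2
    have := dvd_sub hqdvd h2
    simpa using this

theorem stmt9_quad_coeff_eq {R : Type*} [CommRing R] {a b c a' b' c' : R}
    (h : Polynomial.C a * Polynomial.X^2 + Polynomial.C b * Polynomial.X + Polynomial.C c
       = Polynomial.C a' * Polynomial.X^2 + Polynomial.C b' * Polynomial.X + Polynomial.C c') :
    a = a' ∧ b = b' ∧ c = c' := by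
  refine ⟨?_, ?_, ?_⟩
  · have := congrArg (fun q => Polynomial.coeff q 2) h
    simpa [Polynomial.coeff_add, Polynomial.coeff_C_mul, Polynomial.coeff_X_pow,
      Polynomial.coeff_C, Polynomial.coeff_X] using this
  · have := congrArg (fun q => Polynomial.coeff q 1) h
    simpa [Polynomial.coeff_add, Polynomial.coeff_C_mul, Polynomial.coeff_X_pow,
      Polynomial.coeff_C, Polynomial.coeff_X] using this
  · have := congrArg (fun q => Polynomial.coeff q 0) h
    simpa [Polynomial.coeff_add, Polynomial.coeff_C_mul, Polynomial.coeff_X_pow,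
      Polynomial.coeff_C, Polynomial.coeff_X] using this

noncomputable def stmt9_sigma0 (K : Type*) [Field K] :
    MvPolynomial (Fin 4) K →ₐ[K] MvPolynomial (Fin 4) K :=
  aeval (fun j : Fin 4 => if j = 1 then 0 else X j)

theorem stmt9_prime_X1 (K : Type*) [Field K] : Prime (X 1 : MvPolynomial (Fin 4) K) := by
  rw [← MulEquiv.prime_iff
    ((renameEquiv K (Equiv.swap (0 : Fin 4) 1)).trans (finSuccEquiv K 3)).toRingEquiv.toMulEquiv]
  have : (((renameEquiv K (Equiv.swap (0 : Fin 4) 1)).trans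
      (finSuccEquiv K 3)).toRingEquiv.toMulEquiv (X 1)) = Polynomial.X := by
    simp [renameEquiv_apply, rename_X, finSuccEquiv_X_zero]
  rw [this]
  exact Polynomial.prime_X

theorem stmt9_quad_irred {K : Type*} [Field K] [CharP K 2]
    (d d1 : ℕ) (hd1 : 1 ≤ d1) (hdd : d1 < d) (hdeg : 2 * d1 < d + 1)
    (B c : MvPolynomial (Fin 4) K) (bd : K) (hbd : bd ≠ 0)
    (hB : (X 1 : MvPolynomial (Fin 4) K) ^ (d - d1) ∣ B)
    (hc : stmt9_sigma0 K c = (X 0 - X 2) * C bd * (X 0 ^ d - X 2 ^ d)) :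
    Irreducible (Polynomial.C ((X 1 : MvPolynomial (Fin 4) K) ^ (d-1)) * Polynomial.X ^ 2
      + Polynomial.C B * Polynomial.X + Polynomial.C c) := by
  have hXne : (X 1 : MvPolynomial (Fin 4) K) ≠ 0 := X_ne_zero 1
  have hAne : ((X 1 : MvPolynomial (Fin 4) K) ^ (d-1)) ≠ 0 := pow_ne_zero _ hXne
  set Q : Polynomial (MvPolynomial (Fin 4) K) := Polynomial.C ((X 1 : MvPolynomial (Fin 4) K) ^ (d-1)) * Polynomial.X ^ 2
      + Polynomial.C B * Polynomial.X + Polynomial.C c with hQ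
  have hQdeg : Q.natDegree = 2 := Polynomial.natDegree_quadratic hAne
  have hprime : Prime (X 1 : MvPolynomial (Fin 4) K) := stmt9_prime_X1 K
  -- the evaluation showing stmt9_sigma0 c ≠ 0 and the final contradiction
  have hσ1 : stmt9_sigma0 K (X 1 : MvPolynomial (Fin 4) K) = 0 := by simp [stmt9_sigma0]
  have hXc : ¬ (X 1 : MvPolynomial (Fin 4) K) ∣ c := by
    intro ⟨t, ht⟩
    have h0 : stmt9_sigma0 K c = 0 := by rw [ht, map_mul, hσ1, zero_mul]
    rw [hc] at h0
    have := congrArg (eval (fun j : Fin 4 => if j = 0 then (1:K) else 0)) h0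
    simp [zero_pow (by omega : d ≠ 0), hbd] at this
  -- main irreducibility
  constructor
  · intro hu
    have := Polynomial.natDegree_eq_zero_of_isUnit hu
    rw [hQdeg] at this; exact two_ne_zero this
  rintro g h hgh
  by_contra hcon
  push_neg at hcon
  obtain ⟨hgu, hhu⟩ := hcon
  have hQne : Q ≠ 0 := fun h0 => by simp [h0] at hQdeg
  have hg0 : g ≠ 0 := fun h0 => hQne (by rw [hgh, h0, zero_mul])
  have hh0 : h ≠ 0 := fun h0 => hQne (by rw [hgh, h0, mul_zero])
  have hdegs : g.natDegree + h.natDegree = 2 := by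
    rw [← Polynomial.natDegree_mul hg0 hh0, ← hgh, hQdeg]
  -- coefficients of Q
  have hQ2 : Q.coeff 2 = (X 1 : MvPolynomial (Fin 4) K) ^ (d-1) := by
    rw [hQ]
    simp only [Polynomial.coeff_add, Polynomial.coeff_C_mul, Polynomial.coeff_X_pow,
      Polynomial.coeff_C, Polynomial.coeff_X]
    norm_num
  have hQ0 : Q.coeff 0 = c := by
    rw [hQ]
    simp only [Polynomial.coeff_add, Polynomial.coeff_C_mul, Polynomial.coeff_X_pow,
      Polynomial.coeff_C, Polynomial.coeff_X]
    norm_num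
  -- rule out constant factors
  have const_case : ∀ g0 : MvPolynomial (Fin 4) K, (g0 ∣ (X 1 : MvPolynomial (Fin 4) K) ^ (d-1)) → (g0 ∣ c) → IsUnit g0 := by
    intro g0 hdA hdc
    by_contra hg0u
    obtain ⟨i, hi, hass⟩ := (dvd_prime_pow hprime _).mp hdA
    rcases Nat.eq_zero_or_pos i with h0 | h0
    · rw [h0, pow_zero] at hass
      exact hg0u (associated_one_iff_isUnit.mp hass)
    · have hX1g0 : (X 1 : MvPolynomial (Fin 4) K) ∣ g0 := (dvd_pow_self (X 1 : MvPolynomial (Fin 4) K) (by omega)).trans hass.symm.dvd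
      exact hXc (hX1g0.trans hdc)
  rcases (by omega : g.natDegree = 0 ∨ g.natDegree = 1 ∨ g.natDegree = 2) with hng | hng | hng
  · -- g constant
    obtain ⟨g0, hg⟩ := Polynomial.natDegree_eq_zero.mp hng
    have h2 : g0 ∣ (X 1 : MvPolynomial (Fin 4) K) ^ (d-1) := by
      refine ⟨h.coeff 2, ?_⟩
      rw [← hQ2, hgh, ← hg, Polynomial.coeff_C_mul]
    have h0 : g0 ∣ c := by
      refine ⟨h.coeff 0, ?_⟩
      rw [← hQ0, hgh, ← hg, Polynomial.coeff_C_mul]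
    exact hgu (by rw [← hg]; exact Polynomial.isUnit_C.mpr (const_case g0 h2 h0))
  · -- both degree 1
    have hnh : h.natDegree = 1 := by omega
    have hgrep : g = Polynomial.C (g.coeff 1) * Polynomial.X + Polynomial.C (g.coeff 0) :=
      Polynomial.eq_X_add_C_of_degree_le_one
        (Polynomial.degree_le_natDegree.trans (by simp [hng]))
    have hhrep : h = Polynomial.C (h.coeff 1) * Polynomial.X + Polynomial.C (h.coeff 0) :=
      Polynomial.eq_X_add_C_of_degree_le_one
        (Polynomial.degree_le_natDegree.trans (by simp [hnh]))
    set α := g.coeff 1; set β := g.coeff 0; set γ := h.coeff 1; set δ := h.coeff 0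
    have hexp : Q = Polynomial.C (α*γ) * Polynomial.X^2 + Polynomial.C (α*δ + β*γ) * Polynomial.X
        + Polynomial.C (β*δ) := by
      rw [hgh, hgrep, hhrep]; simp only [map_add, map_mul]; ring
    have hQeq : Polynomial.C ((X 1 : MvPolynomial (Fin 4) K) ^ (d-1)) * Polynomial.X^2
        + Polynomial.C B * Polynomial.X + Polynomial.C c
        = Polynomial.C (α*γ) * Polynomial.X^2 + Polynomial.C (α*δ + β*γ) * Polynomial.X
        + Polynomial.C (β*δ) := by rw [← hQ]; exact hexp
    have hco := stmt9_quad_coeff_eq hQeq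
    have hA : α * γ = (X 1 : MvPolynomial (Fin 4) K) ^ (d-1) := hco.1.symm
    have hBe : α * δ + β * γ = B := hco.2.1.symm
    have hce : β * δ = c := hco.2.2.symm
    have hXβ : ¬ (X 1 : MvPolynomial (Fin 4) K) ∣ β := fun hh' => hXc (hce ▸ hh'.mul_right δ)
    have hXδ : ¬ (X 1 : MvPolynomial (Fin 4) K) ∣ δ := fun hh' => hXc (hce ▸ hh'.mul_left β)
    obtain ⟨i, hi, hass⟩ := (dvd_prime_pow hprime _).mp (⟨γ, hA.symm⟩ : α ∣ (X 1 : MvPolynomial (Fin 4) K)^(d-1))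
    obtain ⟨u, hu⟩ := hass
    have hαeq : α = (X 1 : MvPolynomial (Fin 4) K)^i * ↑u⁻¹ := by
      have : α * ↑u * ↑u⁻¹ = (X 1 : MvPolynomial (Fin 4) K)^i * ↑u⁻¹ := by rw [hu]
      rwa [mul_assoc, Units.mul_inv, mul_one] at this
    have hγeq : γ = ↑u * (X 1 : MvPolynomial (Fin 4) K)^(d-1-i) := by
      have hne : ((X 1 : MvPolynomial (Fin 4) K)^i) ≠ 0 := pow_ne_zero _ hXne
      have : (X 1 : MvPolynomial (Fin 4) K)^i * (↑u⁻¹ * γ) = (X 1 : MvPolynomial (Fin 4) K)^i * (X 1 : MvPolynomial (Fin 4) K)^(d-1-i) := by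
        rw [← mul_assoc, ← hαeq, hA, ← pow_add, Nat.add_sub_cancel' hi]
      have h2 := mul_left_cancel₀ hne this
      calc γ = ↑u * (↑u⁻¹ * γ) := by rw [← mul_assoc, Units.mul_inv, one_mul]
        _ = ↑u * (X 1 : MvPolynomial (Fin 4) K)^(d-1-i) := by rw [h2]
    set A1 : MvPolynomial (Fin 4) K := ↑u⁻¹ * δ
    set A2 : MvPolynomial (Fin 4) K := ↑u * β
    have hBsum : B = (X 1 : MvPolynomial (Fin 4) K)^i * A1 + (X 1 : MvPolynomial (Fin 4) K)^(d-1-i) * A2 := by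
      rw [← hBe, hαeq, hγeq]; ring
    have hnd1 : ¬ (X 1 : MvPolynomial (Fin 4) K) ∣ A1 := by
      intro hdvd
      rcases hprime.dvd_mul.mp hdvd with h' | h'
      · exact hprime.not_unit (isUnit_of_dvd_unit h' u⁻¹.isUnit)
      · exact hXδ h'
    have hnd2 : ¬ (X 1 : MvPolynomial (Fin 4) K) ∣ A2 := by
      intro hdvd
      rcases hprime.dvd_mul.mp hdvd with h' | h'
      · exact hprime.not_unit (isUnit_of_dvd_unit h' u.isUnit)
      · exact hXβ h'
    -- trichotomy
    have hBdvd : (X 1 : MvPolynomial (Fin 4) K)^(d-d1) ∣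
        (X 1 : MvPolynomial (Fin 4) K)^i * A1 + (X 1 : MvPolynomial (Fin 4) K)^(d-1-i) * A2 := by
      rw [← hBsum]; exact hB
    have hkey : (X 1 : MvPolynomial (Fin 4) K) ∣ A1 + A2 := by
      rcases le_total i (d-1-i) with hik | hik
      · exact (stmt9_key_dvd hXne hnd1 hik (by omega) hBdvd).2
      · rw [add_comm ((X 1 : MvPolynomial (Fin 4) K)^i * A1)] at hBdvd
        have := (stmt9_key_dvd hXne hnd2 hik (by omega) hBdvd).2
        rwa [add_comm] at this
    obtain ⟨w, hw⟩ := hkey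
    have hσsum : stmt9_sigma0 K A1 + stmt9_sigma0 K A2 = 0 := by
      rw [← map_add, hw, map_mul, hσ1, zero_mul]
    have hσA1 : stmt9_sigma0 K A1 = - stmt9_sigma0 K A2 := by linear_combination hσsum
    have hβ : β = ↑u⁻¹ * A2 := by rw [← mul_assoc, Units.inv_mul, one_mul]
    have hδ : δ = ↑u * A1 := by rw [← mul_assoc, Units.mul_inv, one_mul]
    have hβδ : β * δ = A2 * A1 := by
      rw [hβ, hδ, mul_mul_mul_comm, Units.inv_mul, one_mul]
    have hsq : stmt9_sigma0 K c = -(stmt9_sigma0 K A2)^2 := by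
      rw [← hce, hβδ, map_mul, hσA1]; ring
    have hzero : pderiv (2 : Fin 4) (stmt9_sigma0 K c) = 0 := by
      rw [hsq, map_neg, pderiv_pow, neg_eq_zero]
      have h2 : ((2 : ℕ) : MvPolynomial (Fin 4) K) = 0 := by
        exact_mod_cast CharP.cast_eq_zero (MvPolynomial (Fin 4) K) 2
      rw [h2, zero_mul, zero_mul]
    have h1 : pderiv (2 : Fin 4) ((X 0 - X 2 : MvPolynomial (Fin 4) K) * C bd
        * (X 0 ^ d - X 2 ^ d)) = 0 := by rw [← hc]; exact hzero
    have h2 := congrArg (eval (fun j : Fin 4 => if j = 0 then (1:K) else 0)) h1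
    have e1 : (0:K)^d = 0 := zero_pow (by omega)
    have e2 : (0:K)^(d-1) = 0 := zero_pow (by omega)
    simp [pderiv_mul, pderiv_X_self, pderiv_X_of_ne, map_sub, pderiv_pow, e1, e2, hbd] at h2
  · -- h constant
    have hnh : h.natDegree = 0 := by omega
    obtain ⟨h0c, hh⟩ := Polynomial.natDegree_eq_zero.mp hnh
    have h2 : h0c ∣ (X 1 : MvPolynomial (Fin 4) K) ^ (d-1) := by
      refine ⟨g.coeff 2, ?_⟩
      rw [← hQ2, hgh, ← hh, mul_comm, Polynomial.coeff_C_mul]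
    have h0 : h0c ∣ c := by
      refine ⟨g.coeff 0, ?_⟩
      rw [← hQ0, hgh, ← hh, mul_comm, Polynomial.coeff_C_mul]
    exact hhu (by rw [← hh]; exact Polynomial.isUnit_C.mpr (const_case h0c h2 h0))

noncomputable def chvar (K : Type) [Field K] :
    MvPolynomial (Fin 5) K ≃ₐ[K] MvPolynomial (Fin 5) K :=
  AlgEquiv.ofAlgHom
    (aeval (fun i : Fin 5 => if i = 0 then X 2 else if i = 2 then X 0 + X 4 else X i))
    (aeval (fun i : Fin 5 => if i = 0 then X 2 - X 4 else if i = 2 then X 0 else X i))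
    (by apply algHom_ext; intro i; fin_cases i <;> simp)
    (by apply algHom_ext; intro i; fin_cases i <;> simp)

theorem chvar_X0 (K : Type) [Field K] : chvar K (X 0) = X 2 := by simp [chvar]
theorem chvar_X1 (K : Type) [Field K] : chvar K (X 1) = X 1 := by simp [chvar]
theorem chvar_X2 (K : Type) [Field K] : chvar K (X 2) = X 0 + X 4 := by simp [chvar]
theorem chvar_X3 (K : Type) [Field K] : chvar K (X 3) = X 3 := by simp [chvar]
theorem chvar_X4 (K : Type) [Field K] : chvar K (X 4) = X 4 := by simp [chvar]
theorem chvar_C (K : Type) [Field K] (r : K) : chvar K (C r) = C r := by simp [chvar]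

theorem fse_X1 (K : Type) [Field K] :
    finSuccEquiv K 4 (X 1) = Polynomial.C (X 0) := by
  rw [show (1 : Fin 5) = Fin.succ 0 from rfl, finSuccEquiv_X_succ]
theorem fse_X2 (K : Type) [Field K] :
    finSuccEquiv K 4 (X 2) = Polynomial.C (X 1) := by
  rw [show (2 : Fin 5) = Fin.succ 1 from rfl, finSuccEquiv_X_succ]
theorem fse_X3 (K : Type) [Field K] :
    finSuccEquiv K 4 (X 3) = Polynomial.C (X 2) := by
  rw [show (3 : Fin 5) = Fin.succ 2 from rfl, finSuccEquiv_X_succ]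
theorem fse_X4 (K : Type) [Field K] :
    finSuccEquiv K 4 (X 4) = Polynomial.C (X 3) := by
  rw [show (4 : Fin 5) = Fin.succ 3 from rfl, finSuccEquiv_X_succ]
theorem fse_C (K : Type) [Field K] (r : K) :
    finSuccEquiv K 4 (C r) = Polynomial.C (C r) := by
  simp [finSuccEquiv_apply, eval₂Hom_C]

theorem glue (K : Type) [Field K] (a' : ℕ → K) (b' : ℕ → ℕ → K)
    (hb' : ∀ i j, j ≠ 0 → b' i j = 0) (d : ℕ) (hd : 1 ≤ d) :
    finSuccEquiv K 4 (chvar K (SpolySpec a' b' d)) =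
      Polynomial.C ((X 1 : MvPolynomial (Fin 4) K) ^ (d-1)) * Polynomial.X ^ 2
      + Polynomial.C (- ∑ i ∈ Finset.range (d+1),
          C (a' i) * ((X 2 : MvPolynomial (Fin 4) K) ^ i - X 0 ^ i) * X 1 ^ (d - i))
        * Polynomial.X
      + Polynomial.C (- (((X 0 : MvPolynomial (Fin 4) K) - X 2) * ∑ i ∈ Finset.range (d+1),
          C (b' i 0) * ((X 2 : MvPolynomial (Fin 4) K) ^ i - X 0 ^ i) * X 1 ^ (d - i))) := by
  have hS : SpolySpec a' b' d =
      (X 2 - X 4) ^ 2 * X 0 ^ (d - 1)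
      - (X 2 - X 4) * (∑ i ∈ Finset.range (d + 1), C (a' i) * (X 3 ^ i - X 1 ^ i) * X 0 ^ (d - i))
      - (X 1 - X 3) * (∑ i ∈ Finset.range (d + 1),
          C (b' i 0) * (X 3 ^ i - X 1 ^ i) * X 0 ^ (d - i)) := by
    unfold SpolySpec
    congr 1
    congr 1
    apply Finset.sum_congr rfl
    intro i _
    rw [Finset.sum_eq_single_of_mem 0 (Finset.mem_range.mpr (by omega))]
    · simp
    · intro j _ hj
      rw [hb' i j hj, map_zero, zero_mul, zero_mul]
  rw [hS]
  simp only [map_sub, map_mul, map_pow, map_add, map_sum, chvar_X0, chvar_X1, chvar_X2,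
    chvar_X3, chvar_X4, chvar_C, fse_X1, fse_X2, fse_X3, fse_X4, fse_C,
    finSuccEquiv_X_zero, add_sub_cancel_right, map_neg]
  ring

theorem stmt_9
    (p ℓ : ℕ) (hp : p.Prime) (hℓ : 0 < ℓ)
    (F : Type) [Field F] [Fintype F] [CharP F p]
    (hcard : Fintype.card F = p ^ ℓ)
    (a : ℕ → F) (b : ℕ → ℕ → F)
    (ha0 : a 0 = 0) (hb00 : b 0 0 = 0) (hb01 : b 0 1 = 0)
    (d1 d2 d : ℕ)
    (hd1pos : 1 ≤ d1)
    (hd1ub : ∀ i, a i ≠ 0 → i ≤ d1)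
    (hd1max : d1 ≠ 1 → a d1 ≠ 0)
    (hd2ub : ∀ i j, b i j ≠ 0 → i + j ≤ d2)
    (hd2max : ∃ i j, i + j = d2 ∧ b i j ≠ 0)
    (hd : d = max d1 d2)
    (j2 : ℕ)
    (hj2ex : ∃ i, b i j2 ≠ 0) (hj2ub : ∀ i j, b i j ≠ 0 → j ≤ j2)
    (hp2 : p = 2) (hd1v : 1 < d1) (hdd : d1 < d2) (hj2v : j2 = 0)
    (hdeg : 2 * d1 < d2 + 1) :
    HasAbsIrredComp (SpolySpec a b d) := by
  subst hp2 hj2v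
  have hdd2 : d = d2 := by rw [hd, max_eq_right hdd.le]
  subst hdd2
  set K := AlgebraicClosure F
  haveI : CharP K 2 := charP_of_injective_algebraMap (algebraMap F K).injective 2
  set am : F →+* K := algebraMap F K with ham
  have hinj : Function.Injective am := am.injective
  -- b d 0 ≠ 0
  have hbd : b d 0 ≠ 0 := by
    obtain ⟨i, j, hij, hb⟩ := hd2max
    have hj0 : j = 0 := Nat.le_zero.mp (hj2ub i j hb)
    subst hj0
    have hid : i = d := by omega
    subst hid
    exact hb
  -- b vanishes for j ≠ 0
  have hb0 : ∀ i j, j ≠ 0 → b i j = 0 := by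
    intro i j hj
    by_contra hne
    exact hj (Nat.le_zero.mp (hj2ub i j hne))
  set a' : ℕ → K := fun i => am (a i) with ha'
  set b' : ℕ → ℕ → K := fun i j => am (b i j) with hb'
  have hb0' : ∀ i j, j ≠ 0 → b' i j = 0 := fun i j hj => by
    simp [hb', hb0 i j hj]
  -- the mapped polynomial
  have hmap : MvPolynomial.map am (SpolySpec a b d) = SpolySpec a' b' d := by
    simp only [SpolySpec, map_sub, map_mul, map_pow, map_sum, MvPolynomial.map_C,
      MvPolynomial.map_X, ha', hb']
  -- irreducibility of the image
  have hirr : Irreducible (MvPolynomial.map am (SpolySpec a b d)) := by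
    rw [← MulEquiv.irreducible_iff (chvar K), ← MulEquiv.irreducible_iff (finSuccEquiv K 4)]
    rw [hmap, glue K a' b' hb0' d (by omega)]
    apply stmt9_quad_irred d d1 (by omega) (by omega) (by omega) _ _ (b' d 0)
    · -- hbd ≠ 0
      exact fun h => hbd (hinj (by simpa [hb'] using h))
    · -- divisibility of B
      rw [dvd_neg]
      apply Finset.dvd_sum
      intro i _
      by_cases hai : a i = 0
      · simp [ha', hai]
      · have hile : i ≤ d1 := hd1ub i hai
        exact Dvd.dvd.mul_left (pow_dvd_pow (X 1) (by omega)) _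
    · -- sigma0 computation
      rw [map_neg, map_mul, map_sum]
      have hσ0 : stmt9_sigma0 K (X 0 - X 2 : MvPolynomial (Fin 4) K) = X 0 - X 2 := by
        simp [stmt9_sigma0]
      rw [hσ0]
      have hsum : ∑ i ∈ Finset.range (d+1), stmt9_sigma0 K
          (C (b' i 0) * ((X 2 : MvPolynomial (Fin 4) K) ^ i - X 0 ^ i) * X 1 ^ (d - i))
          = C (b' d 0) * ((X 2 : MvPolynomial (Fin 4) K) ^ d - X 0 ^ d) := by
        rw [Finset.sum_eq_single_of_mem d (Finset.self_mem_range_succ d)]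
        · simp [stmt9_sigma0]
        · intro i hi hne
          have : d - i ≠ 0 := by
            have := Finset.mem_range.mp hi
            omega
          simp [stmt9_sigma0, zero_pow this]
      rw [hsum]
      ring
  refine ⟨SpolySpec a b d, dvd_refl _, ?_, hirr⟩
  -- total degree nonzero
  intro h0
  have hC : SpolySpec a b d = C (coeff 0 (SpolySpec a b d)) := by
    ext m
    rw [coeff_C]
    split_ifs with hm
    · rw [← hm]
    · by_contra hne
      have hsup : m ∈ (SpolySpec a b d).support := mem_support_iff.mpr hne
      have := (totalDegree_eq_zero_iff _ _).mp h0 m hsup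
      exact hm (Finsupp.ext fun x => by simp [this x]).symm
  rw [hC] at hirr
  rw [MvPolynomial.map_C] at hirr
  by_cases hz : am (coeff 0 (SpolySpec a b d)) = 0
  · rw [hz, map_zero] at hirr
    exact not_irreducible_zero hirr
  · exact hirr.not_isUnit ((isUnit_iff_ne_zero.mpr hz).map C)
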